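/- Let m, n ≥ 2 and let S be a valid subset of Q_m × Q_n such that some column or some row of S contains exactly one element. Assume that every valid subset S′ of Q_{m′} × Q_{n′} with m′ < m, or n′ < n, or |S′| < |S| is reachable in the extremal subset automaton 𝒟_{m′,n′}. Then S is reachable in 𝒟_{m,n}. -/

import Mathlib

/-- The extremal shuffle NFA `𝒩_{m,n}`: its alphabet `Σ_{m,n}` has one letter for
every pair of transformations of `Q_m = Fin m` and `Q_n = Fin n`, its state set is
`Q_m × Q_n`, its initial state is `(1,1)` (here `(0,0)`), and a letter
`a = (s,t)` takes `(p,q)` to `{(s p, q), (p, t q)}`. -/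
def extremalNFA (m n : ℕ) :
    NFA ((Fin m → Fin m) × (Fin n → Fin n)) (Fin m × Fin n) where
  step := fun pq a => {(a.1 pq.1, pq.2), (pq.1, a.2 pq.2)}
  start := {pq | pq.1.val = 0 ∧ pq.2.val = 0}
  accept := ∅

/-- A subset `S ⊆ Q_m × Q_n` is valid if it contains a state in column 1
and a state in row 1 (Condition (C)). -/
def ValidSubset {m n : ℕ} (S : Set (Fin m × Fin n)) : Prop :=
  (∃ p ∈ S, p.2.val = 0) ∧ (∃ p ∈ S, p.1.val = 0)

/-- `S` is reachable in the subset automaton `𝒟_{m,n}` of the extremal shuffle NFA,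
i.e. it is obtained from the initial subset `{(1,1)}` by reading some word. -/
def ReachableIn {m n : ℕ} (S : Set (Fin m × Fin n)) : Prop :=
  ∃ w : List ((Fin m → Fin m) × (Fin n → Fin n)),
    S = (extremalNFA m n).evalFrom (extremalNFA m n).start w

/-- Let `m, n ≥ 2` and let `S` be a valid subset with a column or a row containing
exactly one element. If every valid subset `S'` of `Q_{m'} × Q_{n'}` with `m' < m`,
or `n' < n`, or `|S'| < |S|` is reachable in `𝒟_{m',n'}`, then `S` is reachable
in `𝒟_{m,n}`. -/
lemma mem_stepSetE {m n : ℕ} {T : Set (Fin m × Fin n)}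
    {a : (Fin m → Fin m) × (Fin n → Fin n)} {x : Fin m × Fin n} :
    x ∈ (extremalNFA m n).stepSet T a ↔
      ∃ pq ∈ T, x = (a.1 pq.1, pq.2) ∨ x = (pq.1, a.2 pq.2) := by
  simp [NFA.mem_stepSet, extremalNFA]
lemma evalFrom_app {m n : ℕ} (T : Set (Fin m × Fin n)) (w₁ w₂) :
    (extremalNFA m n).evalFrom T (w₁ ++ w₂)
      = (extremalNFA m n).evalFrom ((extremalNFA m n).evalFrom T w₁) w₂ := by
  simp [NFA.evalFrom, List.foldl_append]
lemma reach_of_step_eq {m n : ℕ} {T S : Set (Fin m × Fin n)} (h : ReachableIn T)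
    (a) (he : (extremalNFA m n).stepSet T a = S) : ReachableIn S := by
  obtain ⟨w, hw⟩ := h
  exact ⟨w ++ [a], by rw [evalFrom_app, ← hw, ← he]; rfl⟩
lemma start_eq {m n : ℕ} (hm : 0 < m) (hn : 0 < n) :
    (extremalNFA m n).start = {(⟨0, hm⟩, ⟨0, hn⟩)} := by
  ext ⟨p, q⟩
  simp [extremalNFA, Prod.ext_iff, Fin.ext_iff]

/-- Remove `(r,q̂)` from `S` and restore it from the singleton column `ĉ`. -/
lemma restore {m n : ℕ} (S : Set (Fin m × Fin n)) (r : Fin m) (c q : Fin n)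
    (h1 : (r, c) ∈ S) (h2 : (r, q) ∈ S) (hne : q ≠ c)
    (huniq : ∀ i, (i, c) ∈ S → i = r)
    (hval : ValidSubset (S \ {(r, q)}))
    (ihcard : ∀ S' : Set (Fin m × Fin n), ValidSubset S' → S'.ncard < S.ncard →
      ReachableIn S') : ReachableIn S := by
  classical
  have hT : ReachableIn (S \ {(r, q)}) :=
    ihcard _ hval (Set.ncard_diff_singleton_lt_of_mem h2 S.toFinite)
  refine reach_of_step_eq hT (id, fun v => if v = c then q else v) ?_
  ext x
  rw [mem_stepSetE]
  constructor
  · rintro ⟨⟨p, v⟩, ⟨hpv, hnot⟩, h | h⟩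
    · simpa [h] using hpv
    · simp only at h
      subst h
      by_cases hv : v = c
      · have : p = r := huniq p (by rwa [hv] at hpv)
        simp [hv, this, h2]
      · simpa [hv] using hpv
  · intro hx
    by_cases hxq : x = (r, q)
    · refine ⟨(r, c), ⟨h1, by simp [Prod.ext_iff, hne.symm]⟩, Or.inr ?_⟩
      simp [hxq]
    · exact ⟨x, ⟨hx, by simpa using hxq⟩, Or.inl (by simp)⟩

/-- Every valid subset with at most 2 elements is reachable. -/
lemma small_reach {m n : ℕ} (hm : 2 ≤ m) (hn : 2 ≤ n) (S : Set (Fin m × Fin n))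
    (hvalid : ValidSubset S) (hcard : S.ncard ≤ 2) : ReachableIn S := by
  classical
  have hm0 : 0 < m := by omega
  have hn0 : 0 < n := by omega
  set z₀ : Fin m := ⟨0, hm0⟩
  set w₀ : Fin n := ⟨0, hn0⟩
  -- one-letter reachability of {(i,0),(0,j)}
  have pat1 : ∀ (i : Fin m) (j : Fin n),
      ReachableIn ({((i, w₀) : Fin m × Fin n), (z₀, j)} : Set (Fin m × Fin n)) := by
    intro i j
    refine reach_of_step_eq ⟨[], rfl⟩ ((fun _ => i), (fun _ => j)) ?_
    rw [start_eq hm0 hn0]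
    ext x
    rw [mem_stepSetE]
    constructor
    · rintro ⟨pq, hpq, h | h⟩ <;> simp_all <;> simp [z₀, w₀]
    · intro hx
      rcases hx with h | h <;> exact ⟨(z₀, w₀), rfl, by simp_all⟩
  have pat2 : ∀ (x : Fin m) (y : Fin n), x ≠ z₀ → y ≠ w₀ →
      ReachableIn ({((z₀, w₀) : Fin m × Fin n), (x, y)} : Set (Fin m × Fin n)) := by
    intro x y hx hy
    have h1 : ReachableIn ({((x, w₀) : Fin m × Fin n), (z₀, y)} : Set (Fin m × Fin n)) :=
      pat1 x y
    refine reach_of_step_eq h1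
      ((fun i => if i = x then z₀ else x), (fun j => if j = y then w₀ else y)) ?_
    ext u
    rw [mem_stepSetE]
    constructor
    · rintro ⟨pq, hpq, h | h⟩ <;>
      · rcases hpq with h' | h' <;> simp_all [Prod.ext_iff]
    · intro hu
      rcases hu with h | h
      · exact ⟨(x, w₀), Or.inl rfl, Or.inl (by simp [h])⟩
      · simp only [Set.mem_singleton_iff] at h
        exact ⟨(z₀, y), Or.inr rfl, Or.inl (by simp [h, hx, Ne.symm hx])⟩
  have hone : ReachableIn ({((z₀, w₀) : Fin m × Fin n)} : Set (Fin m × Fin n)) :=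
    ⟨[], by rw [start_eq hm0 hn0]; rfl⟩
  obtain ⟨⟨p₁, hp₁S, hp₁⟩, ⟨p₂, hp₂S, hp₂⟩⟩ := hvalid
  have hp₁2 : p₁.2 = w₀ := Fin.ext hp₁
  have hp₂1 : p₂.1 = z₀ := Fin.ext hp₂
  interval_cases hc : S.ncard
  · exact absurd (Set.ncard_eq_zero S.toFinite |>.1 hc ▸ hp₁S) (Set.notMem_empty _)
  · obtain ⟨a, ha⟩ := Set.ncard_eq_one.1 hc
    subst ha
    simp only [Set.mem_singleton_iff] at hp₁S hp₂S
    have : a = (z₀, w₀) :=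
      Prod.ext_iff.mpr ⟨hp₂S ▸ hp₂1, hp₁S ▸ hp₁2⟩
    rw [this]
    exact hone
  · by_cases h00 : ((z₀, w₀) : Fin m × Fin n) ∈ S
    · obtain ⟨a, b, hab, hS⟩ := Set.ncard_eq_two.1 hc
      have hz : ∃ z, S = {((z₀, w₀) : Fin m × Fin n), z} := by
        rw [hS] at h00 ⊢
        rcases h00 with h | h
        · exact ⟨b, by rw [h]⟩
        · simp only [Set.mem_singleton_iff] at h
          exact ⟨a, by rw [h, Set.pair_comm]⟩
      obtain ⟨z, hz⟩ := hz
      subst hz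
      by_cases hz2 : z.2 = w₀
      · have := pat1 z.1 w₀
        rwa [show ((z.1, w₀) : Fin m × Fin n) = z from by rw [← hz2],
          Set.pair_comm] at this
      · by_cases hz1 : z.1 = z₀
        · have := pat1 z₀ z.2
          rwa [show ((z₀, z.2) : Fin m × Fin n) = z from by rw [← hz1]] at this
        · have := pat2 z.1 z.2 hz1 hz2
          rwa [show ((z.1, z.2) : Fin m × Fin n) = z from rfl] at this
    · have hne : p₁ ≠ p₂ := by
        rintro rfl
        exact h00 (by rw [← hp₂1, ← hp₁2]; simpa using hp₁S)
      have hsub : ({p₁, p₂} : Set (Fin m × Fin n)) ⊆ S := by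
        rintro x (rfl | hx)
        · exact hp₁S
        · simp only [Set.mem_singleton_iff] at hx; rw [hx]; exact hp₂S
      have hSeq : ({p₁, p₂} : Set (Fin m × Fin n)) = S :=
        Set.eq_of_subset_of_ncard_le hsub (by rw [hc, Set.ncard_pair hne]) S.toFinite
      have := pat1 p₁.1 p₂.2
      rwa [show ((p₁.1, w₀) : Fin m × Fin n) = p₁ from by rw [← hp₁2],
        show ((z₀, p₂.2) : Fin m × Fin n) = p₂ from by rw [← hp₂1], hSeq] at this

section Sim
variable {m n m' n' : ℕ}

/-- Extend a transformation along an injection, sending everything else to `dflt`. -/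
noncomputable def extFun (f : Fin m' → Fin m) (dflt : Fin m) (s : Fin m' → Fin m') :
    Fin m → Fin m :=
  fun x => if h : ∃ p, f p = x then f (s h.choose) else dflt

lemma extFun_apply {f : Fin m' → Fin m} (hf : Function.Injective f) (dflt) (s) (p) :
    extFun f dflt s (f p) = f (s p) := by
  unfold extFun
  rw [dif_pos ⟨p, rfl⟩]
  congr 2
  exact hf (⟨p, rfl⟩ : ∃ q, f q = f p).choose_spec

lemma extFun_dflt {f : Fin m' → Fin m} {dflt : Fin m} (h : ∀ p, f p ≠ dflt) (s) :
    extFun f dflt s dflt = dflt := dif_neg (by rintro ⟨p, hp⟩; exact h p hp)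

/-- The product embedding. -/
def embMap (f : Fin m' → Fin m) (g : Fin n' → Fin n) :
    Fin m' × Fin n' → Fin m × Fin n := fun pq => (f pq.1, g pq.2)

noncomputable def extLetter (f : Fin m' → Fin m) (g : Fin n' → Fin n)
    (r : Fin m) (c : Fin n) (a : (Fin m' → Fin m') × (Fin n' → Fin n')) :
    (Fin m → Fin m) × (Fin n → Fin n) :=
  (extFun f r a.1, extFun g c a.2)

lemma sim_step (f : Fin m' → Fin m) (g : Fin n' → Fin n) (r : Fin m) (c : Fin n)
    (hf : Function.Injective f) (hg : Function.Injective g)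
    (hfr : ∀ p, f p ≠ r) (hgc : ∀ q, g q ≠ c)
    (T : Set (Fin m' × Fin n')) (a : (Fin m' → Fin m') × (Fin n' → Fin n')) :
    (extremalNFA m n).stepSet (insert (r, c) (embMap f g '' T)) (extLetter f g r c a)
      = insert (r, c) (embMap f g '' ((extremalNFA m' n').stepSet T a)) := by
  ext x
  rw [mem_stepSetE]
  constructor
  · rintro ⟨pq, hpq, hx | hx⟩ <;> rcases hpq with h | ⟨⟨p, q⟩, hT, h⟩
    · subst h; subst hx
      exact Or.inl (by simp [extLetter, extFun_dflt hfr])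
    · subst hx
      rw [← h]
      refine Or.inr ⟨(a.1 p, q), ?_, ?_⟩
      · rw [NFA.mem_stepSet]
        exact ⟨(p, q), hT, by simp [extremalNFA]⟩
      · simp [embMap, extLetter, extFun_apply hf]
    · subst h; subst hx
      exact Or.inl (by simp [extLetter, extFun_dflt hgc])
    · subst hx
      rw [← h]
      refine Or.inr ⟨(p, a.2 q), ?_, ?_⟩
      · rw [NFA.mem_stepSet]
        exact ⟨(p, q), hT, by simp [extremalNFA]⟩
      · simp [embMap, extLetter, extFun_apply hg]
  · rintro (hx | ⟨y, hy, hxy⟩)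
    · refine ⟨(r, c), Or.inl rfl, Or.inl ?_⟩
      rw [hx]
      simp [extLetter, extFun_dflt hfr]
    · rw [NFA.mem_stepSet] at hy
      obtain ⟨⟨p, q⟩, hT, hstep⟩ := hy
      simp only [extremalNFA, Set.mem_insert_iff, Set.mem_singleton_iff] at hstep
      rcases hstep with h | h
      · refine ⟨(f p, g q), Or.inr ⟨(p, q), hT, rfl⟩, Or.inl ?_⟩
        rw [← hxy, h]
        simp [embMap, extLetter, extFun_apply hf]
      · refine ⟨(f p, g q), Or.inr ⟨(p, q), hT, rfl⟩, Or.inr ?_⟩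
        rw [← hxy, h]
        simp [embMap, extLetter, extFun_apply hg]

lemma sim_eval (f : Fin m' → Fin m) (g : Fin n' → Fin n) (r : Fin m) (c : Fin n)
    (hf : Function.Injective f) (hg : Function.Injective g)
    (hfr : ∀ p, f p ≠ r) (hgc : ∀ q, g q ≠ c)
    (w : List ((Fin m' → Fin m') × (Fin n' → Fin n'))) :
    ∀ T : Set (Fin m' × Fin n'),
    (extremalNFA m n).evalFrom (insert (r, c) (embMap f g '' T))
        (w.map (extLetter f g r c))
      = insert (r, c) (embMap f g '' ((extremalNFA m' n').evalFrom T w)) := by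
  induction w with
  | nil => intro T; rfl
  | cons a w ihw =>
    intro T
    show (extremalNFA m n).evalFrom
        ((extremalNFA m n).stepSet (insert (r, c) (embMap f g '' T)) (extLetter f g r c a))
        (w.map (extLetter f g r c)) = _
    rw [sim_step f g r c hf hg hfr hgc T a, ihw]
    rfl

end Sim

/-- An injection `Fin (k-1) → Fin k` avoiding `r`, hitting everything else,
and sending `0` to a prescribed `z ≠ r`. -/
lemma exists_embed {k : ℕ} (hk : 2 ≤ k) (r z : Fin k) (hz : z ≠ r) :
    ∃ f : Fin (k-1) → Fin k, Function.Injective f ∧ (∀ p, f p ≠ r) ∧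
      (∀ x, x ≠ r → ∃ p, f p = x) ∧ f ⟨0, by omega⟩ = z := by
  classical
  have hk1 : 1 ≤ k - 1 := by omega
  set skip : Fin (k-1) → Fin k := fun p =>
    if p.val < r.val then ⟨p.val, by omega⟩ else ⟨p.val + 1, by omega⟩ with hskip
  have hr : r.val < k := r.isLt
  have skip_val : ∀ p, (skip p).val = if p.val < r.val then p.val else p.val + 1 := by
    intro p
    by_cases h : p.val < r.val <;> simp [hskip, h]
  have skip_inj : Function.Injective skip := by
    intro p q h
    have := congrArg Fin.val h
    rw [skip_val, skip_val] at this
    apply Fin.ext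
    by_cases h1 : p.val < r.val <;> by_cases h2 : q.val < r.val <;> simp [h1, h2] at this <;> omega
  have skip_ne : ∀ p, skip p ≠ r := by
    intro p hp
    have := congrArg Fin.val hp
    rw [skip_val] at this
    by_cases h : p.val < r.val <;> simp [h] at this <;> omega
  have skip_surj : ∀ x, x ≠ r → ∃ p, skip p = x := by
    intro x hx
    have hxr : x.val ≠ r.val := fun h => hx (Fin.ext h)
    by_cases h : x.val < r.val
    · refine ⟨⟨x.val, by omega⟩, Fin.ext ?_⟩
      rw [skip_val]; simp [h]
    · refine ⟨⟨x.val - 1, by omega⟩, Fin.ext ?_⟩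
      rw [skip_val]
      have : ¬ (x.val - 1 < r.val) := by omega
      simp only [this, if_false]
      omega
  obtain ⟨i₀, hi₀⟩ := skip_surj z hz
  set a0 : Fin (k-1) := ⟨0, by omega⟩ with ha0
  refine ⟨skip ∘ (Equiv.swap a0 i₀), ?_, ?_, ?_, ?_⟩
  · exact skip_inj.comp (Equiv.injective _)
  · intro p; exact skip_ne _
  · intro x hx
    obtain ⟨p, hp⟩ := skip_surj x hx
    exact ⟨Equiv.swap a0 i₀ p, by simp [Equiv.swap_apply_self, hp]⟩
  · show skip (Equiv.swap a0 i₀ a0) = z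
    rw [Equiv.swap_apply_left, hi₀]

section Swap
variable {m n : ℕ}

def swapLetter (a : (Fin m → Fin m) × (Fin n → Fin n)) :
    (Fin n → Fin n) × (Fin m → Fin m) := (a.2, a.1)

lemma swap_stepSet (T : Set (Fin m × Fin n)) (a) :
    Prod.swap '' ((extremalNFA m n).stepSet T a)
      = (extremalNFA n m).stepSet (Prod.swap '' T) (swapLetter a) := by
  ext x
  constructor
  · rintro ⟨y, hy, rfl⟩
    rw [mem_stepSetE] at hy
    obtain ⟨pq, hpq, h | h⟩ := hy <;> rw [mem_stepSetE] <;>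
      exact ⟨pq.swap, ⟨pq, hpq, rfl⟩, by simp [h, swapLetter]⟩
  · intro hx
    rw [mem_stepSetE] at hx
    obtain ⟨pq, ⟨y, hy, rfl⟩, h | h⟩ := hx
    · refine ⟨(y.1, a.2 y.2), ?_, by simp [h, swapLetter]⟩
      rw [mem_stepSetE]; exact ⟨y, hy, Or.inr rfl⟩
    · refine ⟨(a.1 y.1, y.2), ?_, by simp [h, swapLetter]⟩
      rw [mem_stepSetE]; exact ⟨y, hy, Or.inl rfl⟩

lemma swap_eval (w : List ((Fin m → Fin m) × (Fin n → Fin n))) :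
    ∀ T : Set (Fin m × Fin n),
    Prod.swap '' ((extremalNFA m n).evalFrom T w)
      = (extremalNFA n m).evalFrom (Prod.swap '' T) (w.map swapLetter) := by
  induction w with
  | nil => intro T; rfl
  | cons a w ihw =>
    intro T
    show Prod.swap '' ((extremalNFA m n).evalFrom ((extremalNFA m n).stepSet T a) w) = _
    rw [ihw, swap_stepSet]
    rfl

lemma swap_start :
    (Prod.swap '' (extremalNFA m n).start : Set (Fin n × Fin m))
      = (extremalNFA n m).start := by
  ext x
  constructor
  · rintro ⟨y, hy, rfl⟩; exact ⟨hy.2, hy.1⟩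
  · rintro ⟨h1, h2⟩; exact ⟨x.swap, ⟨h2, h1⟩, Prod.swap_swap x⟩

lemma reach_swap {S : Set (Fin m × Fin n)} (h : ReachableIn S) :
    ReachableIn (Prod.swap '' S) := by
  obtain ⟨w, hw⟩ := h
  exact ⟨w.map swapLetter, by rw [hw, swap_eval, swap_start]⟩

lemma swap_swap_image (S : Set (Fin m × Fin n)) :
    Prod.swap '' (Prod.swap '' S) = S := by
  rw [← Set.image_comp]
  have h : (Prod.swap ∘ Prod.swap : Fin m × Fin n → Fin m × Fin n) = id :=
    funext fun x => Prod.swap_swap x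
  rw [h, Set.image_id]

end Swap

lemma key {m n : ℕ} (hm : 2 ≤ m) (hn : 2 ≤ n) (S : Set (Fin m × Fin n))
    (hvalid : ValidSubset S) (c : Fin n) (r : Fin m)
    (hrc : (r, c) ∈ S) (huniq : ∀ i, (i, c) ∈ S → i = r)
    (ihcard : ∀ S' : Set (Fin m × Fin n), ValidSubset S' → S'.ncard < S.ncard →
      ReachableIn S')
    (ihsub : ∀ S' : Set (Fin (m-1) × Fin (n-1)), ValidSubset S' → ReachableIn S') :
    ReachableIn S := by
  classical
  have hm0 : 0 < m := by omega
  have hn0 : 0 < n := by omega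
  set z₀ : Fin m := ⟨0, hm0⟩ with hz₀def
  set w₀ : Fin n := ⟨0, hn0⟩ with hw₀def
  by_cases hsmall : S.ncard ≤ 2
  · exact small_reach hm hn S hvalid hsmall
  push_neg at hsmall
  by_cases hiso : ∀ q, (r, q) ∈ S → q = c
  · -- (r,c) is an isolated point : park it and simulate in the (m-1)×(n-1) grid
    set S₀ : Set (Fin m × Fin n) := S \ {(r, c)} with hS₀def
    have hS₀ne : S₀.Nonempty := by
      by_contra h
      rw [Set.not_nonempty_iff_eq_empty, Set.diff_eq_empty] at h
      have := Set.ncard_le_ncard h (Set.finite_singleton _)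
      rw [Set.ncard_singleton] at this
      omega
    have hS₀r : ∀ x ∈ S₀, x.1 ≠ r := by
      rintro ⟨x1, x2⟩ ⟨hxS, hx⟩ h
      subst h
      exact hx (by simp [hiso x2 hxS])
    have hS₀c : ∀ x ∈ S₀, x.2 ≠ c := by
      rintro ⟨x1, x2⟩ ⟨hxS, hx⟩ h
      subst h
      exact hx (by simp [huniq x1 hxS])
    obtain ⟨x₀, hx₀⟩ := hS₀ne
    have hzr : ∃ zr : Fin m, zr ≠ r ∧ (∃ j, (zr, j) ∈ S₀) ∧ (r ≠ z₀ → zr = z₀) := by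
      by_cases hrz : r = z₀
      · exact ⟨x₀.1, hS₀r x₀ hx₀, ⟨x₀.2, by simpa using hx₀⟩, fun h => absurd hrz h⟩
      · obtain ⟨p₂, hp₂S, hp₂⟩ := hvalid.2
        have hp₂1 : p₂.1 = z₀ := Fin.ext hp₂
        have hp₂0 : p₂ ∈ S₀ := by
          refine ⟨hp₂S, ?_⟩
          simp only [Set.mem_singleton_iff]
          intro h
          exact hrz (by rw [← hp₂1, h])
        refine ⟨z₀, Ne.symm hrz, ⟨p₂.2, by rw [← hp₂1]; simpa using hp₂0⟩, fun _ => rfl⟩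
    have hzc : ∃ zc : Fin n, zc ≠ c ∧ (∃ i, (i, zc) ∈ S₀) ∧ (c ≠ w₀ → zc = w₀) := by
      by_cases hcz : c = w₀
      · exact ⟨x₀.2, hS₀c x₀ hx₀, ⟨x₀.1, by simpa using hx₀⟩, fun h => absurd hcz h⟩
      · obtain ⟨p₁, hp₁S, hp₁⟩ := hvalid.1
        have hp₁2 : p₁.2 = w₀ := Fin.ext hp₁
        have hp₁0 : p₁ ∈ S₀ := by
          refine ⟨hp₁S, ?_⟩
          simp only [Set.mem_singleton_iff]
          intro h
          exact hcz (by rw [← hp₁2, h])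
        refine ⟨w₀, Ne.symm hcz, ⟨p₁.1, by rw [← hp₁2]; simpa using hp₁0⟩, fun _ => rfl⟩
    obtain ⟨zr, hzr_ne, ⟨jr, hjr⟩, hzr0⟩ := hzr
    obtain ⟨zc, hzc_ne, ⟨ic, hic⟩, hzc0⟩ := hzc
    obtain ⟨f, hf_inj, hf_ne, hf_surj, hf0⟩ := exists_embed hm r zr hzr_ne
    obtain ⟨g, hg_inj, hg_ne, hg_surj, hg0⟩ := exists_embed hn c zc hzc_ne
    set S₀' : Set (Fin (m-1) × Fin (n-1)) := (embMap f g) ⁻¹' S₀ with hS₀'def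
    have himg : embMap f g '' S₀' = S₀ := by
      rw [hS₀'def, Set.image_preimage_eq_inter_range]
      apply Set.inter_eq_self_of_subset_left
      rintro ⟨x1, x2⟩ hx
      obtain ⟨p, hp⟩ := hf_surj x1 (hS₀r _ hx)
      obtain ⟨q, hq⟩ := hg_surj x2 (hS₀c _ hx)
      exact ⟨(p, q), by simp [embMap, hp, hq]⟩
    have hval' : ValidSubset S₀' := by
      constructor
      · obtain ⟨p, hp⟩ := hf_surj ic (hS₀r _ hic)
        refine ⟨(p, ⟨0, by omega⟩), ?_, rfl⟩
        show embMap f g (p, ⟨0, by omega⟩) ∈ S₀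
        simpa [embMap, hp, hg0] using hic
      · obtain ⟨q, hq⟩ := hg_surj jr (hS₀c _ hjr)
        refine ⟨(⟨0, by omega⟩, q), ?_, rfl⟩
        show embMap f g (⟨0, by omega⟩, q) ∈ S₀
        simpa [embMap, hq, hf0] using hjr
    obtain ⟨w', hw'⟩ := ihsub S₀' hval'
    have hVne : ((r, c) : Fin m × Fin n) ≠ (zr, zc) := by
      simp only [ne_eq, Prod.ext_iff, not_and]
      intro h
      exact absurd h.symm hzr_ne
    have hVvalid : ValidSubset ({(r, c), (zr, zc)} : Set (Fin m × Fin n)) := by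
      constructor
      · by_cases hc : c = w₀
        · exact ⟨(r, c), Or.inl rfl, by rw [hc]⟩
        · exact ⟨(zr, zc), Or.inr rfl, by rw [show zc = w₀ from hzc0 hc]⟩
      · by_cases hr : r = z₀
        · exact ⟨(r, c), Or.inl rfl, by rw [hr]⟩
        · exact ⟨(zr, zc), Or.inr rfl, by rw [show zr = z₀ from hzr0 hr]⟩
    have hVcard : ({(r, c), (zr, zc)} : Set (Fin m × Fin n)).ncard < S.ncard := by
      rw [Set.ncard_pair hVne]
      omega
    obtain ⟨wV, hwV⟩ := ihcard _ hVvalid hVcard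
    refine ⟨wV ++ w'.map (extLetter f g r c), ?_⟩
    rw [evalFrom_app, ← hwV]
    have hVins : ({(r, c), (zr, zc)} : Set (Fin m × Fin n))
        = insert (r, c) (embMap f g '' (extremalNFA (m-1) (n-1)).start) := by
      rw [start_eq (show 0 < m-1 by omega) (show 0 < n-1 by omega)]
      rw [Set.image_singleton]
      simp [embMap, hf0, hg0]
    rw [hVins, sim_eval f g r c hf_inj hg_inj hf_ne hg_ne, ← hw', himg, hS₀def,
      Set.insert_diff_singleton, Set.insert_eq_self.mpr hrc]
  · push_neg at hiso
    obtain ⟨q, hq, hqc⟩ := hiso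
    by_cases hval : ValidSubset (S \ {(r, q)})
    · exact restore S r c q hrc hq hqc huniq hval ihcard
    · obtain ⟨p₁, hp₁S, hp₁⟩ := hvalid.1
      obtain ⟨p₂, hp₂S, hp₂⟩ := hvalid.2
      have hp₁2 : p₁.2 = w₀ := Fin.ext hp₁
      have hp₂1 : p₂.1 = z₀ := Fin.ext hp₂
      rw [ValidSubset, not_and_or] at hval
      have hB : ∃ p ∈ S \ {(r, q)}, p.1.val = 0 := by
        by_cases hr0 : r = z₀
        · refine ⟨(r, c), ⟨hrc, ?_⟩, by rw [hr0]⟩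
          simp only [Set.mem_singleton_iff, Prod.ext_iff, not_and]
          intro _
          exact Ne.symm hqc
        · refine ⟨p₂, ⟨hp₂S, ?_⟩, hp₂⟩
          simp only [Set.mem_singleton_iff]
          intro h
          exact hr0 (by rw [← hp₂1, h])
      have hA : ¬ ∃ p ∈ S \ {(r, q)}, p.2.val = 0 := by
        rcases hval with h | h
        · exact h
        · exact absurd hB h
      have hq0 : q = w₀ := by
        by_contra hq0
        apply hA
        refine ⟨p₁, ⟨hp₁S, ?_⟩, hp₁⟩
        simp only [Set.mem_singleton_iff]
        intro h
        rw [h] at hp₁2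
        exact hq0 hp₁2
      have hcol0 : ∀ i, (i, w₀) ∈ S → i = r := by
        intro i hi
        by_contra hir
        apply hA
        refine ⟨(i, w₀), ⟨hi, ?_⟩, rfl⟩
        simp only [Set.mem_singleton_iff, Prod.ext_iff, not_and]
        intro h1
        exact absurd h1 hir
      have hrw : (r, w₀) ∈ S := by rw [← hq0]; exact hq
      have hcw : c ≠ w₀ := by rw [← hq0]; exact Ne.symm hqc
      refine restore S r w₀ c hrw hrc hcw hcol0 ⟨?_, ?_⟩ ihcard
      · refine ⟨(r, w₀), ⟨hrw, ?_⟩, rfl⟩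
        simp only [Set.mem_singleton_iff, Prod.ext_iff, not_and]
        intro _
        exact fun h => hcw h.symm
      · by_cases hr0 : r = z₀
        · refine ⟨(r, w₀), ⟨hrw, ?_⟩, by rw [hr0]⟩
          simp only [Set.mem_singleton_iff, Prod.ext_iff, not_and]
          intro _
          exact fun h => hcw h.symm
        · refine ⟨p₂, ⟨hp₂S, ?_⟩, hp₂⟩
          simp only [Set.mem_singleton_iff]
          intro h
          exact hr0 (by rw [← hp₂1, h])


theorem stmt_9 {m n : ℕ} (hm : 2 ≤ m) (hn : 2 ≤ n) (S : Set (Fin m × Fin n))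
    (hvalid : ValidSubset S)
    (hsingle :
      (∃ j : Fin n, ∃! i : Fin m, (i, j) ∈ S) ∨
      (∃ i : Fin m, ∃! j : Fin n, (i, j) ∈ S))
    (ih : ∀ (m' n' : ℕ) (S' : Set (Fin m' × Fin n')), ValidSubset S' →
      (m' < m ∨ n' < n ∨ S'.ncard < S.ncard) → ReachableIn S') :
    ReachableIn S := by
  classical
  rcases hsingle with ⟨c, r, hrc, huniq⟩ | ⟨r', c', hrc, huniq⟩
  · exact key hm hn S hvalid c r hrc huniq
      (fun S' hv hlt => ih m n S' hv (Or.inr (Or.inr hlt)))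
      (fun S' hv => ih (m-1) (n-1) S' hv (Or.inl (by omega)))
  · have hσvalid : ValidSubset (Prod.swap '' S) := by
      obtain ⟨⟨p₁, hp₁S, hp₁⟩, ⟨p₂, hp₂S, hp₂⟩⟩ := hvalid
      exact ⟨⟨p₂.swap, ⟨p₂, hp₂S, rfl⟩, hp₂⟩, ⟨p₁.swap, ⟨p₁, hp₁S, rfl⟩, hp₁⟩⟩
    have hrc' : ((c', r') : Fin n × Fin m) ∈ Prod.swap '' S := ⟨(r', c'), hrc, rfl⟩
    have huniq' : ∀ j, ((j, r') : Fin n × Fin m) ∈ Prod.swap '' S → j = c' := by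
      rintro j ⟨y, hy, hsw⟩
      have hy2 : y = (r', j) := by rw [← Prod.swap_swap y, hsw, Prod.swap_prod_mk]
      rw [hy2] at hy
      exact huniq j hy
    have hcard_eq : (Prod.swap '' S).ncard = S.ncard :=
      Set.ncard_image_of_injective _ Prod.swap_injective
    have hreach := key hn hm (Prod.swap '' S) hσvalid r' c' hrc' huniq'
      (fun S' hv hlt => ih n m S' hv (Or.inr (Or.inr (by rwa [hcard_eq] at hlt))))
      (fun S' hv => ih (n-1) (m-1) S' hv (by
        rcases Nat.lt_or_ge (n-1) m with h | h
        · exact Or.inl h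
        · exact Or.inr (Or.inl (by omega))))
    have hfin := reach_swap hreach
    rwa [swap_swap_image] at hfin
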